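/- Let G be the tree consisting of a root s joined to l vertices s₁,…,s_l, where each sᵢ is joined to kᵢ, and each kᵢ is joined to 4 leaves (so G has 6l+1 vertices). Then the number of total perfect dominating sets of G is exactly 4^{l-1}·l, and none of them contains s. -/

import Mathlib

/-- The tree with root `s = none`, children `sᵢ = some (i, none)`, each `sᵢ` joined to
`kᵢ = some (i, some none)`, and each `kᵢ` joined to 4 leaves `some (i, some (some j))`. -/
def brushTree (l : ℕ) : SimpleGraph (Option (Fin l × Option (Option (Fin 4)))) :=
  SimpleGraph.fromRel (fun a b =>
    (a = none ∧ ∃ i : Fin l, b = some (i, none)) ∨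
    (∃ i : Fin l, a = some (i, none) ∧ b = some (i, some none)) ∨
    (∃ (i : Fin l) (j : Fin 4), a = some (i, some none) ∧ b = some (i, some (some j))))

/-- `D` is a total perfect dominating set of `G`: every vertex has exactly one neighbor
in `D`. -/
def IsTotalPerfectDom {V : Type*} (G : SimpleGraph V) (D : Set V) : Prop :=
  ∀ v : V, (G.neighborSet v ∩ D).ncard = 1

namespace Brush

variable {l : ℕ}

abbrev V (l : ℕ) := Option (Fin l × Option (Option (Fin 4)))

def vS (i : Fin l) : V l := some (i, none)
def vK (i : Fin l) : V l := some (i, some none)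
def vL (i : Fin l) (j : Fin 4) : V l := some (i, some (some j))

lemma adj_iff (a b : V l) : (brushTree l).Adj a b ↔
    (a = none ∧ ∃ i, b = vS i) ∨ (b = none ∧ ∃ i, a = vS i) ∨
    (∃ i, a = vS i ∧ b = vK i) ∨ (∃ i, b = vS i ∧ a = vK i) ∨
    (∃ i j, a = vK i ∧ b = vL i j) ∨ (∃ i j, b = vK i ∧ a = vL i j) := by
  simp only [brushTree, SimpleGraph.fromRel_adj, vS, vK, vL]
  constructor
  · rintro ⟨-, h | h⟩ <;> aesop
  · rintro h
    constructor
    · rintro rfl; aesop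
    · aesop

lemma nb_none : (brushTree l).neighborSet none = Set.range vS := by
  ext v; simp [SimpleGraph.neighborSet, adj_iff, vS, vK, vL, eq_comm]

lemma nb_S (i : Fin l) : (brushTree l).neighborSet (vS i) = {none, vK i} := by
  ext v; simp [SimpleGraph.neighborSet, adj_iff, vS, vK, vL]

lemma nb_K (i : Fin l) :
    (brushTree l).neighborSet (vK i) = insert (vS i) (Set.range (vL i)) := by
  ext v; simp [SimpleGraph.neighborSet, adj_iff, vS, vK, vL, eq_comm]

lemma nb_L (i : Fin l) (j : Fin 4) : (brushTree l).neighborSet (vL i j) = {vK i} := by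
  ext v; simp [SimpleGraph.neighborSet, adj_iff, vS, vK, vL]


def Dof (i₀ : Fin l) (g : Fin l → Option (Fin 4)) : Set (V l) :=
  {v | (∃ i, v = vK i) ∨ v = vS i₀ ∨ ∃ i j, g i = some j ∧ v = vL i j}

variable {i₀ : Fin l} {g : Fin l → Option (Fin 4)}

lemma none_not_mem_Dof : none ∉ Dof i₀ g := by
  simp [Dof, vS, vK, vL]

lemma vK_mem_Dof (i : Fin l) : vK i ∈ Dof i₀ g := Or.inl ⟨i, rfl⟩

lemma vS_mem_Dof (i : Fin l) : vS i ∈ Dof i₀ g ↔ i = i₀ := by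
  simp [Dof, vS, vK, vL]

lemma vL_mem_Dof (i : Fin l) (j : Fin 4) : vL i j ∈ Dof i₀ g ↔ g i = some j := by
  simp [Dof, vS, vK, vL]

lemma vS_injective : Function.Injective (vS (l := l)) := by
  intro a b h; simpa [vS] using h

lemma vL_injective (i : Fin l) : Function.Injective (vL i) := by
  intro a b h; simpa [vL] using h

lemma Dof_isTPD (hg : ∀ i, g i = none ↔ i = i₀) :
    IsTotalPerfectDom (brushTree l) (Dof i₀ g) := by
  rintro (_ | ⟨i, _ | (_ | j)⟩)
  · -- v = none : intersection is {vS i₀}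
    have : (brushTree l).neighborSet none ∩ Dof i₀ g = {vS i₀} := by
      rw [nb_none]
      ext v
      simp only [Set.mem_inter_iff, Set.mem_range, Set.mem_singleton_iff]
      constructor
      · rintro ⟨⟨i, rfl⟩, hv⟩
        rw [vS_mem_Dof] at hv; rw [hv]
      · rintro rfl; exact ⟨⟨i₀, rfl⟩, (vS_mem_Dof i₀).2 rfl⟩
    rw [this]; simp
  · -- v = vS i
    show ((brushTree l).neighborSet (vS i) ∩ Dof i₀ g).ncard = 1
    have : (brushTree l).neighborSet (vS i) ∩ Dof i₀ g = {vK i} := by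
      rw [nb_S]
      ext v
      simp only [Set.mem_inter_iff, Set.mem_insert_iff, Set.mem_singleton_iff]
      constructor
      · rintro ⟨rfl | rfl, hv⟩
        · exact absurd hv none_not_mem_Dof
        · rfl
      · rintro rfl; exact ⟨Or.inr rfl, vK_mem_Dof i⟩
    rw [this]; simp
  · -- v = vK i
    show ((brushTree l).neighborSet (vK i) ∩ Dof i₀ g).ncard = 1
    rcases eq_or_ne i i₀ with rfl | hne
    · have : (brushTree l).neighborSet (vK i) ∩ Dof i g = {vS i} := by
        rw [nb_K]
        ext v
        simp only [Set.mem_inter_iff, Set.mem_insert_iff, Set.mem_range,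
          Set.mem_singleton_iff]
        constructor
        · rintro ⟨rfl | ⟨j, rfl⟩, hv⟩
          · rfl
          · rw [vL_mem_Dof, (hg i).2 rfl] at hv; exact absurd hv (by simp)
        · rintro rfl; exact ⟨Or.inl rfl, (vS_mem_Dof i).2 rfl⟩
      rw [this]; simp
    · obtain ⟨j, hj⟩ : ∃ j, g i = some j := by
        rcases h : g i with _ | j
        · exact absurd ((hg i).1 h) hne
        · exact ⟨j, rfl⟩
      have : (brushTree l).neighborSet (vK i) ∩ Dof i₀ g = {vL i j} := by
        rw [nb_K]
        ext v
        simp only [Set.mem_inter_iff, Set.mem_insert_iff, Set.mem_range,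
          Set.mem_singleton_iff]
        constructor
        · rintro ⟨rfl | ⟨j', rfl⟩, hv⟩
          · rw [vS_mem_Dof] at hv; exact absurd hv hne
          · rw [vL_mem_Dof, hj] at hv
            obtain rfl : j = j' := by simpa using hv
            rfl
        · rintro rfl; exact ⟨Or.inr ⟨j, rfl⟩, (vL_mem_Dof i j).2 hj⟩
      rw [this]; simp
  · -- v = vL i j
    show ((brushTree l).neighborSet (vL i j) ∩ Dof i₀ g).ncard = 1
    have : (brushTree l).neighborSet (vL i j) ∩ Dof i₀ g = {vK i} := by
      rw [nb_L]
      exact Set.inter_eq_self_of_subset_left (by simp [vK_mem_Dof])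
    rw [this]; simp


lemma TPD_characterize (hl : 0 < l) {D : Set (V l)}
    (hD : IsTotalPerfectDom (brushTree l) D) :
    ∃ (i₀ : Fin l) (g : Fin l → Option (Fin 4)),
      (∀ i, g i = none ↔ i = i₀) ∧ D = Dof i₀ g := by
  -- every kᵢ is in D
  have hK : ∀ i : Fin l, vK i ∈ D := by
    intro i
    obtain ⟨a, ha⟩ := Set.ncard_eq_one.1 (hD (vL i 0))
    rw [nb_L] at ha
    have h1 : a ∈ ({vK i} : Set _) ∩ D := ha ▸ rfl
    obtain ⟨rfl, h2⟩ := h1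
    exact h2
  -- none is not in D
  have hnone : (none : V l) ∉ D := by
    intro hmem
    set i : Fin l := ⟨0, hl⟩
    obtain ⟨a, ha⟩ := Set.ncard_eq_one.1 (hD (vS i))
    rw [nb_S] at ha
    have h1 : (none : V l) ∈ ({a} : Set _) := ha ▸ ⟨Or.inl rfl, hmem⟩
    have h2 : vK i ∈ ({a} : Set _) := ha ▸ ⟨Or.inr rfl, hK i⟩
    rw [Set.mem_singleton_iff] at h1 h2
    exact absurd (h1.trans h2.symm) (by simp [vK])
  -- exactly one sᵢ in D
  obtain ⟨a, ha⟩ := Set.ncard_eq_one.1 (hD none)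
  rw [nb_none] at ha
  have haa : a ∈ Set.range vS ∩ D := ha ▸ rfl
  obtain ⟨⟨i₀, rfl⟩, hSD⟩ := haa
  have hS : ∀ i : Fin l, vS i ∈ D ↔ i = i₀ := by
    intro i
    constructor
    · intro h
      have : vS i ∈ ({vS i₀} : Set _) := ha ▸ ⟨⟨i, rfl⟩, h⟩
      exact vS_injective this
    · rintro rfl; exact hSD
  -- for each i, determine leaves
  have hKD : ∀ i : Fin l, ∃ o : Option (Fin 4),
      (o = none ↔ i = i₀) ∧ ∀ j, vL i j ∈ D ↔ o = some j := by
    intro i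
    obtain ⟨b, hb⟩ := Set.ncard_eq_one.1 (hD (vK i))
    rw [nb_K] at hb
    rcases eq_or_ne i i₀ with heq | hne
    · refine ⟨none, by simp [heq], fun j => ⟨fun h => ?_, by simp⟩⟩
      have h1 : vL i j ∈ ({b} : Set _) := hb ▸ ⟨Or.inr ⟨j, rfl⟩, h⟩
      have h2 : vS i ∈ ({b} : Set _) := hb ▸ ⟨Or.inl rfl, heq ▸ hSD⟩
      rw [Set.mem_singleton_iff] at h1 h2
      have : vL i j = vS i := h1.trans h2.symm
      simp [vL, vS] at this
    · have hbb : b ∈ insert (vS i) (Set.range (vL i)) ∩ D := hb ▸ rfl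
      obtain ⟨rfl | ⟨j, rfl⟩, haD⟩ := hbb
      · exact absurd ((hS i).1 haD) hne
      · refine ⟨some j, by simp [hne], fun j' => ⟨fun h => ?_, ?_⟩⟩
        · have h1 : vL i j' ∈ ({vL i j} : Set _) := hb ▸ ⟨Or.inr ⟨j', rfl⟩, h⟩
          rw [Set.mem_singleton_iff] at h1
          obtain rfl := vL_injective i h1
          rfl
        · rintro h
          obtain rfl : j = j' := by simpa using h
          exact haD
  choose g hg1 hg2 using hKD
  refine ⟨i₀, g, hg1, ?_⟩
  ext v
  match v with
  | none => simp [hnone, none_not_mem_Dof]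
  | some (i, none) =>
      show vS i ∈ D ↔ vS i ∈ Dof i₀ g
      rw [hS, vS_mem_Dof]
  | some (i, some none) =>
      show vK i ∈ D ↔ vK i ∈ Dof i₀ g
      simp [hK i, vK_mem_Dof i]
  | some (i, some (some j)) =>
      show vL i j ∈ D ↔ vL i j ∈ Dof i₀ g
      rw [hg2, vL_mem_Dof]


lemma Dof_inj {i₀ i₁ : Fin l} {g g' : Fin l → Option (Fin 4)}
    (hg : ∀ i, g i = none ↔ i = i₀) (hg' : ∀ i, g' i = none ↔ i = i₁)
    (h : Dof i₀ g = Dof i₁ g') : i₀ = i₁ ∧ g = g' := by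
  have hii : i₀ = i₁ := by
    have : vS i₀ ∈ Dof i₁ g' := h ▸ (vS_mem_Dof i₀).2 rfl
    exact (vS_mem_Dof i₀).1 this
  subst hii
  refine ⟨rfl, funext fun i => ?_⟩
  rcases hgi : g i with _ | j
  · exact ((hg' i).2 ((hg i).1 hgi)).symm
  · have : vL i j ∈ Dof i₀ g' := h ▸ (vL_mem_Dof i j).2 hgi
    exact ((vL_mem_Dof i j).1 this).symm

def param (l : ℕ) : Type :=
  {p : Fin l × (Fin l → Option (Fin 4)) // ∀ i, p.2 i = none ↔ i = p.1}

lemma card_TPD (hl : 0 < l) :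
    Nat.card {D : Set (V l) // IsTotalPerfectDom (brushTree l) D} = 4 ^ (l - 1) * l := by
  classical
  have e : param l ≃ {D : Set (V l) // IsTotalPerfectDom (brushTree l) D} := by
    refine Equiv.ofBijective (fun p => ⟨Dof p.1.1 p.1.2, Dof_isTPD p.2⟩) ⟨?_, ?_⟩
    · rintro ⟨⟨i₀, g⟩, hp⟩ ⟨⟨i₁, g'⟩, hq⟩ hpq
      simp only [Subtype.mk.injEq] at hpq
      obtain ⟨h1, h2⟩ := Dof_inj hp hq hpq
      subst h1; subst h2; rfl
    · rintro ⟨D, hD⟩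
      obtain ⟨i₀, g, hg, rfl⟩ := TPD_characterize hl hD
      exact ⟨⟨⟨i₀, g⟩, hg⟩, rfl⟩
  rw [← Nat.card_congr e]
  have e2 : param l ≃ Σ i₀ : Fin l, {g : Fin l → Option (Fin 4) // ∀ i, g i = none ↔ i = i₀} :=
    { toFun := fun p => ⟨p.1.1, p.1.2, p.2⟩
      invFun := fun q => ⟨(q.1, q.2.1), q.2.2⟩
      left_inv := fun p => rfl
      right_inv := fun q => rfl }
  rw [Nat.card_congr e2]
  have e3 : ∀ i₀ : Fin l,
      {g : Fin l → Option (Fin 4) // ∀ i, g i = none ↔ i = i₀} ≃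
        ({i : Fin l // i ≠ i₀} → Fin 4) := by
    intro i₀
    refine
      { toFun := fun g i => (g.1 i.1).get ?_
        invFun := fun f => ⟨fun i => if h : i = i₀ then none else some (f ⟨i, h⟩), ?_⟩
        left_inv := ?_
        right_inv := ?_ }
    · exact Option.isSome_iff_ne_none.2 fun hn => i.2 ((g.2 i.1).1 hn)
    · intro i
      by_cases h : i = i₀ <;> simp [h]
    · rintro ⟨g, hg⟩
      ext i : 2
      by_cases h : i = i₀
      · simp only [dif_pos h]; exact ((hg i).2 h).symm
      · simp [h]
    · intro f
      funext i
      simp [i.2]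
  rw [Nat.card_eq_fintype_card, Fintype.card_sigma]
  have hfib : ∀ i₀ : Fin l,
      Fintype.card {g : Fin l → Option (Fin 4) // ∀ i, g i = none ↔ i = i₀} = 4 ^ (l - 1) := by
    intro i₀
    rw [Fintype.card_congr (e3 i₀), Fintype.card_fun]
    congr 1
    have : Fintype.card {i : Fin l // i ≠ i₀} = l - 1 := by
      have h1 : Fintype.card {i : Fin l // ¬ i = i₀} =
          Fintype.card (Fin l) - Fintype.card {i : Fin l // i = i₀} :=
        Fintype.card_subtype_compl _
      rw [Fintype.card_subtype_eq, Fintype.card_fin] at h1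
      calc Fintype.card {i : Fin l // i ≠ i₀}
          = Fintype.card {i : Fin l // ¬ i = i₀} := by convert rfl
        _ = l - 1 := h1
    rw [this]
  simp [hfib, Finset.sum_const, mul_comm]

end Brush

theorem brushTree_total_perfect_dom (l : ℕ) (hl : 0 < l) :
    Fintype.card (Option (Fin l × Option (Option (Fin 4)))) = 6 * l + 1 ∧
    Set.ncard {D : Set (Option (Fin l × Option (Option (Fin 4)))) |
      IsTotalPerfectDom (brushTree l) D} = 4 ^ (l - 1) * l ∧
    ∀ D : Set (Option (Fin l × Option (Option (Fin 4)))),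
      IsTotalPerfectDom (brushTree l) D → none ∉ D := by
  refine ⟨?_, ?_, ?_⟩
  · simp [Fintype.card_option, Fintype.card_prod]; ring
  · rw [← Nat.card_coe_set_eq]
    exact Brush.card_TPD hl
  · intro D hD
    obtain ⟨i₀, g, hg, rfl⟩ := Brush.TPD_characterize hl hD
    exact Brush.none_not_mem_Dof
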